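/- Let Λ = ℚ[p_1, p_2, …] be the polynomial ring over ℚ in countably many variables p_k indexed by positive integers. Define h_m ∈ Λ by h_0 = 1 and m·h_m = Σ_{i=1}^m p_i·h_{m−i} for m ≥ 1; for n ≥ 1 let D_n be the unique ℚ-linear derivation of Λ with D_n(p_k) = k^n for all k ≥ 1; and for r ∈ ℕ let ε_r : Λ → ℚ be the ℚ-algebra homomorphism with ε_r(p_k) = r. Let a_1, …, a_h be positive integers (h ≥ 1), let t = #{i : a_i = 1}, and let |a| = a_1 + ⋯ + a_h. Then for all m ≥ 0 and r ≥ 1, ε_r((D_{a_1} ∘ ⋯ ∘ D_{a_h})(h_m)) = Σ_{b} (∏_{i=1}^h E(a_i−1, b_i−1)) · C(r+m+|b|−t−1, r+|a|−1), where the sum runs over all tuples b = (b_1,…,b_h) with 1 ≤ b_i ≤ a_i for each i, |b| = b_1 + ⋯ + b_h, C(·,·) is the binomial coefficient, and E(·,·) are the Eulerian numbers. -/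

import Mathlib

open MvPolynomial

/-- The derivation `D_n` of `Λ = ℚ[p_1, p_2, …]` with `D_n(p_k) = k^n` for all `k ≥ 1`. -/
noncomputable def Dn (n : ℕ) : Derivation ℚ (MvPolynomial ℕ+ ℚ) (MvPolynomial ℕ+ ℚ) :=
  mkDerivation ℚ fun k : ℕ+ => C (((k : ℕ) : ℚ) ^ n)

/-- The `ℚ`-algebra homomorphism `ε_r : Λ → ℚ` with `ε_r(p_k) = r` for all `k ≥ 1`. -/
noncomputable def epsHom (r : ℚ) : MvPolynomial ℕ+ ℚ →ₐ[ℚ] ℚ :=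
  aeval fun _ : ℕ+ => r

/-- Eulerian numbers: `E(0,0) = 1`, `E(0,j) = 0` for `j ≥ 1`, vanishing for negative second
argument, and `E(n,j) = (j+1)·E(n-1,j) + (n-j)·E(n-1,j-1)` for `n ≥ 1`. -/
def eulerianNum : ℕ → ℕ → ℕ
  | 0, 0 => 1
  | 0, _ + 1 => 0
  | n + 1, 0 => eulerianNum n 0
  | n + 1, j + 1 => (j + 2) * eulerianNum n (j + 1) + (n - j) * eulerianNum n j

section NatLemmas
open Finset
lemma eulerian_zero : ∀ n j : ℕ, n ≤ j → 1 ≤ j → eulerianNum n j = 0 := by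
  intro n
  induction n with
  | zero =>
    intro j hn h1
    cases j with
    | zero => omega
    | succ j => rfl
  | succ n ih =>
    intro j hn h1
    cases j with
    | zero => omega
    | succ j =>
      show (j + 2) * eulerianNum n (j + 1) + (n - j) * eulerianNum n j = 0
      rw [ih (j+1) (by omega) (by omega), Nat.sub_eq_zero_of_le (by omega)]
      ring

-- k * C(k+j, s) = (j+1) C(k+j, s+1) + (s-j) C(k+j+1, s+1), for j ≤ s
lemma key_choose (k j s : ℕ) (hj : j ≤ s) :
    k * (k+j).choose s = (j+1) * (k+j).choose (s+1) + (s-j) * (k+j+1).choose (s+1) := by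
  rcases lt_or_ge (k+j) s with h | h
  · rw [Nat.choose_eq_zero_of_lt h, Nat.choose_eq_zero_of_lt (by omega),
      Nat.choose_eq_zero_of_lt (by omega)]
    ring
  · obtain ⟨u, hu⟩ : ∃ u, k + j = s + u := ⟨k + j - s, by omega⟩
    obtain ⟨v, hv⟩ : ∃ v, s = j + v := ⟨s - j, by omega⟩
    have hk : k = u + v := by omega
    have hsj : s - j = v := by omega
    have pas : (k+j+1).choose (s+1) = (k+j).choose s + (k+j).choose (s+1) :=
      Nat.choose_succ_succ (k+j) s
    have hright := Nat.choose_succ_right_eq (k+j) s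
    rw [hu, Nat.add_sub_cancel_left, ← hu] at hright
    rw [hsj, pas]
    subst hk hv
    zify at hright ⊢
    linear_combination -hright

lemma worpitzky (s k : ℕ) : k^s = ∑ j ∈ range (s+1), eulerianNum s j * (k+j).choose s := by
  induction s with
  | zero => simp [eulerianNum]
  | succ s ih =>
    have step : k^(s+1) =
        (∑ j ∈ range (s+1), eulerianNum s j * ((j+1) * (k+j).choose (s+1)))
        + ∑ j ∈ range (s+1), (s-j) * eulerianNum s j * (k+j+1).choose (s+1) := by
      rw [pow_succ, ih, Finset.sum_mul, ← Finset.sum_add_distrib]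
      apply Finset.sum_congr rfl
      intro j hj
      have hjs : j ≤ s := by simpa [Nat.lt_succ_iff] using hj
      have := key_choose k j s hjs
      calc eulerianNum s j * (k+j).choose s * k
          = eulerianNum s j * (k * (k+j).choose s) := by ring
        _ = eulerianNum s j * ((j+1) * (k+j).choose (s+1) + (s-j) * (k+j+1).choose (s+1)) := by
            rw [this]
        _ = eulerianNum s j * ((j+1) * (k+j).choose (s+1))
            + (s-j) * eulerianNum s j * (k+j+1).choose (s+1) := by ring
    rw [step]
    have hA : (∑ j ∈ range (s+1), eulerianNum s j * ((j+1) * (k+j).choose (s+1)))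
        = (∑ j ∈ range (s+1), eulerianNum s (j+1) * ((j+2) * (k+j+1).choose (s+1)))
          + eulerianNum s 0 * (1 * (k+0).choose (s+1)) := by
      rw [Finset.sum_range_succ' (fun j => eulerianNum s j * ((j+1) * (k+j).choose (s+1))) s]
      rw [Finset.sum_range_succ (fun j => eulerianNum s (j+1) * ((j+2) * (k+j+1).choose (s+1))) s]
      rw [eulerian_zero s (s+1) (by omega) (by omega)]
      simp [Nat.add_assoc]
    rw [hA]
    rw [Finset.sum_range_succ' (fun j => eulerianNum (s+1) j * (k+j).choose (s+1)) (s+1)]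
    have expandT : ∀ j, eulerianNum (s+1) (j+1) * (k+(j+1)).choose (s+1)
        = eulerianNum s (j+1) * ((j+2) * (k+j+1).choose (s+1))
          + (s-j) * eulerianNum s j * (k+j+1).choose (s+1) := by
      intro j
      show ((j + 2) * eulerianNum s (j + 1) + (s - j) * eulerianNum s j) * _ = _
      ring
    simp only [expandT]
    rw [Finset.sum_add_distrib]
    have : eulerianNum (s+1) 0 = eulerianNum s 0 := rfl
    rw [this]
    ring

lemma sum_choose_range (P Q : ℕ) (h : P ≤ Q) :
    ∀ m, ∑ j ∈ range m, (j+P).choose Q = (m+P).choose (Q+1) := by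
  intro m
  induction m with
  | zero => simp [Nat.choose_eq_zero_of_lt (by omega : P < Q+1)]
  | succ m ih =>
    rw [Finset.sum_range_succ, ih]
    have : m + 1 + P = (m + P) + 1 := by omega
    rw [this, Nat.choose_succ_succ' (m+P) Q]
    omega

lemma vander' (Q j m : ℕ) :
    ∑ k ∈ range (m+1), (k+j).choose j * (m-k+Q).choose Q = (m+j+Q+1).choose (j+Q+1) := by
  induction Q generalizing m with
  | zero =>
    simp only [Nat.choose_zero_right, mul_one, Nat.add_zero]
    have := sum_choose_range j j le_rfl (m+1)
    simpa [Nat.add_comm, Nat.add_left_comm, Nat.add_assoc] using this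
  | succ Q ihQ =>
    induction m with
    | zero => simp
    | succ m ihm =>
      have split : ∑ k ∈ range (m+2), (k+j).choose j * (m+1-k+(Q+1)).choose (Q+1)
          = (∑ k ∈ range (m+1), (k+j).choose j * (m+1-k+(Q+1)).choose (Q+1))
            + (m+1+j).choose j := by
        rw [Finset.sum_range_succ]
        simp
      have pas : ∀ k ∈ range (m+1),
          (k+j).choose j * (m+1-k+(Q+1)).choose (Q+1)
          = (k+j).choose j * (m-k+(Q+1)).choose (Q+1)
            + (k+j).choose j * (m+1-k+Q).choose Q := by
        intro k hk
        have hk' : k ≤ m := by simpa [Nat.lt_succ_iff] using hk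
        have h1 : m+1-k+(Q+1) = (m-k+(Q+1)) + 1 := by omega
        have h2 : m+1-k+Q = m-k+(Q+1) := by omega
        rw [h1, h2, Nat.choose_succ_succ' (m-k+(Q+1)) Q, Nat.mul_add]
        ring
      rw [split, Finset.sum_congr rfl pas, Finset.sum_add_distrib]
      have e2 : (∑ k ∈ range (m+1), (k+j).choose j * (m+1-k+Q).choose Q)
            + (m+1+j).choose j
          = ∑ k ∈ range (m+2), (k+j).choose j * (m+1-k+Q).choose Q := by
        rw [Finset.sum_range_succ (fun k => (k+j).choose j * (m+1-k+Q).choose Q) (m+1)]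
        simp
      rw [add_assoc, e2, ihm, ihQ (m+1)]
      have h3 : m+1+j+Q+1 = m+j+Q+2 := by omega
      have h4 : m+1+j+(Q+1)+1 = m+j+Q+3 := by omega
      have h5 : m+j+(Q+1)+1 = m+j+Q+2 := by omega
      have h6 : j+(Q+1)+1 = j+Q+2 := by omega
      rw [h3, h4, h5, h6, show m+j+Q+3 = (m+j+Q+2)+1 from rfl,
        show j+Q+2 = (j+Q+1)+1 from rfl, Nat.choose_succ_succ' (m+j+Q+2) (j+Q+1)]
      omega

lemma vander (s j P Q m : ℕ) (hj : j ≤ s) (hPQ : P ≤ Q) :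
    ∑ k ∈ range (m+1), (k+j).choose s * (m-k+P).choose Q = (m+j+P+1).choose (s+Q+1) := by
  rcases lt_or_ge m ((s-j)+(Q-P)) with hm | hm
  · have hz : ∀ k ∈ range (m+1), (k+j).choose s * (m-k+P).choose Q = 0 := by
      intro k hk
      have hk' : k ≤ m := by simpa [Nat.lt_succ_iff] using hk
      rcases lt_or_ge (k+j) s with h1 | h1
      · rw [Nat.choose_eq_zero_of_lt h1, Nat.zero_mul]
      · rw [Nat.choose_eq_zero_of_lt (show m-k+P < Q by omega), Nat.mul_zero]
    rw [Finset.sum_congr rfl hz, Finset.sum_const_zero,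
      Eq.comm, Nat.choose_eq_zero_of_lt (by omega)]
  · set d1 := s - j with hd1
    set d2 := Q - P with hd2
    set m' := m - d1 - d2 with hm'
    have hsplit : m + 1 = d1 + ((m'+1) + d2) := by omega
    rw [hsplit, Finset.sum_range_add, Finset.sum_range_add]
    have z1 : ∑ k ∈ range d1, (k+j).choose s * (m-k+P).choose Q = 0 := by
      apply Finset.sum_eq_zero
      intro k hk
      have : k < d1 := Finset.mem_range.mp hk
      rw [Nat.choose_eq_zero_of_lt (show k+j < s by omega), Nat.zero_mul]
    have z2 : ∑ k ∈ range d2, (d1+(m'+1+k)+j).choose s * (m-(d1+(m'+1+k))+P).choose Q = 0 := by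
      apply Finset.sum_eq_zero
      intro k hk
      have : k < d2 := Finset.mem_range.mp hk
      rw [Nat.choose_eq_zero_of_lt (show m-(d1+(m'+1+k))+P < Q by omega), Nat.mul_zero]
    rw [z1, z2, Nat.zero_add, Nat.add_zero]
    have congr1 : ∀ k ∈ range (m'+1),
        (d1+k+j).choose s * (m-(d1+k)+P).choose Q = (k+s).choose s * (m'-k+Q).choose Q := by
      intro k hk
      have : k ≤ m' := by simpa [Nat.lt_succ_iff] using hk
      congr 1
      · congr 1; omega
      · congr 1; omega
    rw [Finset.sum_congr rfl congr1, vander' Q s m']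
    congr 1
    omega

lemma step_one (P Q m : ℕ) (hPQ : P ≤ Q) :
    ∑ k ∈ range m, (m-(k+1)+P).choose Q = (m+P).choose (Q+1) := by
  rw [show (∑ k ∈ range m, (m-(k+1)+P).choose Q) = ∑ k ∈ range m, ((m-1-k)+P).choose Q
    from Finset.sum_congr rfl fun k _ => by congr 2; omega]
  rw [Finset.sum_range_reflect (fun k => (k+P).choose Q) m]
  exact sum_choose_range P Q hPQ m

lemma step_ge (s P Q m : ℕ) (hs : 1 ≤ s) (hPQ : P ≤ Q) :
    ∑ k ∈ range m, (k+1)^s * (m-(k+1)+P).choose Q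
      = ∑ j ∈ range (s+1), eulerianNum s j * (m+j+P+1).choose (s+Q+1) := by
  have ext : ∑ k ∈ range m, (k+1)^s * (m-(k+1)+P).choose Q
      = ∑ k ∈ range (m+1), k^s * (m-k+P).choose Q := by
    rw [Finset.sum_range_succ' (fun k => k^s * (m-k+P).choose Q) m]
    rw [zero_pow (by omega), Nat.zero_mul, Nat.add_zero]
  rw [ext]
  have expand : ∀ k ∈ range (m+1), k^s * (m-k+P).choose Q
      = ∑ j ∈ range (s+1), eulerianNum s j * ((k+j).choose s * (m-k+P).choose Q) := by
    intro k _
    rw [worpitzky s k, Finset.sum_mul]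
    exact Finset.sum_congr rfl fun j _ => by ring
  rw [Finset.sum_congr rfl expand, Finset.sum_comm]
  apply Finset.sum_congr rfl
  intro j hj
  rw [← Finset.mul_sum, vander s j P Q m (by simpa [Nat.lt_succ_iff] using hj) hPQ]

end NatLemmas

section Alg
open Finset

variable (H : ℕ → MvPolynomial ℕ+ ℚ) (H0 : H 0 = 1)
  (Hrec : ∀ m : ℕ, 1 ≤ m → (m : ℚ) • H m =
      ∑ i ∈ Finset.range m, X i.succPNat * H (m - (i + 1)))

lemma Dn_X (n : ℕ) (i : ℕ) : (Dn n) (X i.succPNat) = C (((i+1 : ℕ) : ℚ) ^ n) := by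
  rw [Dn, mkDerivation_X]
  norm_num

include H0 Hrec in
lemma D_H (n : ℕ) (hn : 1 ≤ n) :
    ∀ m, (Dn n) (H m) = ∑ k ∈ range m, ((((k+1 : ℕ)) : ℚ)^(n-1)) • H (m-(k+1)) := by
  intro m
  induction m using Nat.strong_induction_on with
  | _ m ih =>
    rcases Nat.eq_zero_or_pos m with rfl | hm
    · simp [H0]
    have hm0 : (m : ℚ) ≠ 0 := Nat.cast_ne_zero.mpr (by omega)
    have key : (m : ℚ) • (Dn n) (H m)
        = (m : ℚ) • ∑ k ∈ range m, ((((k+1 : ℕ)) : ℚ)^(n-1)) • H (m-(k+1)) := by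
      calc (m : ℚ) • (Dn n) (H m)
        = (Dn n) ((m : ℚ) • H m) := ((Dn n).map_smul _ _).symm
      _ = (Dn n) (∑ i ∈ range m, X i.succPNat * H (m - (i+1))) := by rw [Hrec m hm]
      _ = ∑ i ∈ range m, ((X i.succPNat) • (Dn n) (H (m-(i+1)))
            + (H (m-(i+1))) • (Dn n) (X i.succPNat)) := by
          rw [map_sum]
          exact Finset.sum_congr rfl fun i _ => (Dn n).leibniz _ _
      _ = ∑ i ∈ range m, ((((i+1:ℕ)):ℚ)^n • H (m-(i+1))
            + X i.succPNat * ∑ k ∈ range (m-(i+1)), ((((k+1:ℕ)):ℚ)^(n-1)) • H (m-(i+1)-(k+1))) := by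
          apply Finset.sum_congr rfl
          intro i hi
          rw [Dn_X, ih (m-(i+1)) (by have := Finset.mem_range.mp hi; omega), smul_eq_mul,
            smul_eq_mul, mul_comm (H (m-(i+1))), ← smul_eq_C_mul]
          ring
      _ = (∑ i ∈ range m, (((i+1:ℕ)):ℚ)^n • H (m-(i+1)))
          + ∑ i ∈ range m, ∑ k ∈ range m,
              (if i+k+2 ≤ m then ((((k+1:ℕ)):ℚ)^(n-1)) • (X i.succPNat * H (m-(i+1)-(k+1))) else 0) := by
          rw [← Finset.sum_add_distrib]
          apply Finset.sum_congr rfl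
          intro i hi
          congr 1
          rw [Finset.mul_sum]
          rw [show range (m-(i+1)) = (range m).filter (fun k => i+k+2 ≤ m) by
            ext k; simp only [Finset.mem_range, Finset.mem_filter]; omega]
          rw [Finset.sum_filter]
          apply Finset.sum_congr rfl
          intro k _
          split
          · rw [mul_smul_comm]
          · rfl
      _ = (∑ i ∈ range m, (((i+1:ℕ)):ℚ)^n • H (m-(i+1)))
          + ∑ k ∈ range m, ((((k+1:ℕ)):ℚ)^(n-1)) • (((m-(k+1) : ℕ)):ℚ) • H (m-(k+1)) := by
          congr 1
          rw [Finset.sum_comm]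
          apply Finset.sum_congr rfl
          intro k _
          rw [← Finset.sum_filter]
          rw [show (range m).filter (fun i => i+k+2 ≤ m) = range (m-(k+1)) by
            ext i; simp only [Finset.mem_range, Finset.mem_filter]; omega]
          rcases Nat.eq_zero_or_pos (m-(k+1)) with hM | hM
          · rw [hM]; simp
          · rw [← Finset.smul_sum]
            congr 1
            rw [Hrec (m-(k+1)) hM]
            apply Finset.sum_congr rfl
            intro i _
            congr 2
            omega
      _ = (m : ℚ) • ∑ k ∈ range m, ((((k+1 : ℕ)) : ℚ)^(n-1)) • H (m-(k+1)) := by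
          rw [← Finset.sum_add_distrib, Finset.smul_sum]
          apply Finset.sum_congr rfl
          intro k hk
          have hkm : k + 1 ≤ m := Finset.mem_range.mp hk
          rw [smul_smul, ← add_smul]
          have hpow : (((k+1:ℕ)):ℚ)^n = (((k+1:ℕ)):ℚ)^(n-1) * (((k+1:ℕ)):ℚ) := by
            conv_lhs => rw [show n = (n-1)+1 by omega]
            rw [pow_succ]
          have hs : (((k+1:ℕ)):ℚ)^n + (((k+1:ℕ)):ℚ)^(n-1) * (((m-(k+1):ℕ)):ℚ)
              = (m:ℚ) * (((k+1:ℕ)):ℚ)^(n-1) := by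
            rw [hpow, Nat.cast_sub hkm]
            push_cast
            ring
          rw [hs, mul_smul]
    calc (Dn n) (H m) = (m:ℚ)⁻¹ • ((m:ℚ) • (Dn n) (H m)) := (inv_smul_smul₀ hm0 _).symm
      _ = (m:ℚ)⁻¹ • ((m:ℚ) • ∑ k ∈ range m, ((((k+1 : ℕ)) : ℚ)^(n-1)) • H (m-(k+1))) := by
          rw [key]
      _ = _ := inv_smul_smul₀ hm0 _

lemma epsHom_X (r : ℚ) (k : ℕ+) : epsHom r (X k) = r := aeval_X _ _

include H0 Hrec in
lemma eps_H (r : ℕ) (hr : 1 ≤ r) :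
    ∀ j, epsHom (r:ℚ) (H j) = (((j + r - 1).choose (r-1) : ℕ) : ℚ) := by
  intro j
  induction j using Nat.strong_induction_on with
  | _ j ih =>
    rcases Nat.eq_zero_or_pos j with rfl | hj
    · rw [H0, map_one, show 0 + r - 1 = r - 1 by omega, Nat.choose_self, Nat.cast_one]
    have hj0 : (j : ℚ) ≠ 0 := Nat.cast_ne_zero.mpr (by omega)
    apply mul_left_cancel₀ hj0
    have := congrArg (epsHom (r:ℚ)) (Hrec j hj)
    rw [map_smul, map_sum, smul_eq_mul] at this
    rw [this]
    have e1 : ∀ i ∈ range j, epsHom (r:ℚ) (X i.succPNat * H (j - (i+1)))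
        = (r : ℚ) * (((j-(i+1)+(r-1)).choose (r-1) : ℕ) : ℚ) := by
      intro i hi
      rw [map_mul, epsHom_X, ih (j-(i+1)) (by have := Finset.mem_range.mp hi; omega)]
      congr 3
      omega
    rw [Finset.sum_congr rfl e1, ← Finset.mul_sum, ← Nat.cast_sum]
    rw [step_one (r-1) (r-1) j le_rfl]
    have key : j * ((j + r - 1).choose (r-1)) = r * ((j+(r-1)).choose ((r-1)+1)) := by
      have h1 := Nat.choose_succ_right_eq (j+r-1) (r-1)
      have h2 : j + r - 1 - (r-1) = j := by omega
      have h3 : r - 1 + 1 = r := by omega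
      rw [h2, h3] at h1
      have h4 : j + (r-1) = j + r - 1 := by omega
      rw [h4, h3]
      rw [Nat.mul_comm j, Nat.mul_comm r]
      exact h1.symm
    exact_mod_cast key.symm

end Alg

section Main
open Finset

lemma sum_Icc_one_eq_range (n : ℕ) (f : ℕ → ℚ) :
    ∑ b ∈ Finset.Icc 1 n, f b = ∑ j ∈ Finset.range n, f (j+1) := by
  induction n with
  | zero => simp
  | succ n ih =>
    rw [Finset.sum_range_succ, ← ih, Finset.sum_Icc_succ_top (by omega)]

variable (H : ℕ → MvPolynomial ℕ+ ℚ) (H0 : H 0 = 1)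
  (Hrec : ∀ m : ℕ, 1 ≤ m → (m : ℚ) • H m =
      ∑ i ∈ Finset.range m, X i.succPNat * H (m - (i + 1)))

include H0 Hrec in
lemma main_aux (r : ℕ) (hr : 1 ≤ r) :
    ∀ (h : ℕ) (a : Fin h → ℕ), (∀ i, 1 ≤ a i) → ∀ m : ℕ,
    epsHom (r : ℚ) ((List.ofFn fun i => (Dn (a i)).toLinearMap).prod (H m)) =
      ∑ b ∈ Fintype.piFinset fun i => Finset.Icc 1 (a i),
        (∏ i, (eulerianNum (a i - 1) (b i - 1) : ℚ)) *
          ((r + m + (∑ i, b i) - (Finset.univ.filter fun i => a i = 1).card - 1).choose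
            (r + (∑ i, a i) - 1) : ℚ) := by
  intro h
  induction h with
  | zero =>
    intro a ha m
    rw [show (List.ofFn fun i : Fin 0 => (Dn (a i)).toLinearMap) = [] from List.ofFn_zero,
      List.prod_nil, Module.End.one_apply, eps_H H H0 Hrec r hr m]
    have hconst : ∀ b ∈ Fintype.piFinset fun i : Fin 0 => Finset.Icc 1 (a i),
        (∏ i, (eulerianNum (a i - 1) (b i - 1) : ℚ)) *
          ((r + m + (∑ i, b i) - (Finset.univ.filter fun i : Fin 0 => a i = 1).card - 1).choose
            (r + (∑ i, a i) - 1) : ℚ) = (((m + r - 1).choose (r-1) : ℕ) : ℚ) := by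
      intro b _
      simp only [Finset.univ_eq_empty, Finset.prod_empty, Finset.sum_empty, one_mul,
        Finset.filter_empty, Finset.card_empty]
      congr 2 <;> omega
    rw [Finset.sum_congr rfl hconst, Finset.sum_const, Fintype.card_piFinset]
    simp
  | succ h IH =>
    intro a ha m
    set aL := a (Fin.last h) with haL
    set a' : Fin h → ℕ := fun i => a i.castSucc with ha'
    -- LHS
    have hlist : (List.ofFn fun i : Fin (h+1) => (Dn (a i)).toLinearMap).prod
        = (List.ofFn fun i : Fin h => (Dn (a' i)).toLinearMap).prod
          * (Dn aL).toLinearMap := by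
      rw [List.ofFn_succ' fun i : Fin (h+1) => (Dn (a i)).toLinearMap, List.prod_concat]
    rw [hlist, Module.End.mul_apply]
    have hD : (Dn aL).toLinearMap (H m)
        = ∑ k ∈ range m, ((((k+1 : ℕ)) : ℚ)^(aL-1)) • H (m-(k+1)) := D_H H H0 Hrec aL (ha _) m
    rw [hD, map_sum, map_sum]
    have hLHS : ∀ k ∈ range m,
        epsHom (r:ℚ) ((List.ofFn fun i : Fin h => (Dn (a' i)).toLinearMap).prod
          (((((k+1 : ℕ)) : ℚ)^(aL-1)) • H (m-(k+1))))
        = ((((k+1 : ℕ)) : ℚ)^(aL-1)) *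
            ∑ b' ∈ Fintype.piFinset fun i : Fin h => Finset.Icc 1 (a' i),
              (∏ i, (eulerianNum (a' i - 1) (b' i - 1) : ℚ)) *
                ((r + (m-(k+1)) + (∑ i, b' i) - (Finset.univ.filter fun i => a' i = 1).card - 1).choose
                  (r + (∑ i, a' i) - 1) : ℚ) := by
      intro k _
      rw [map_smul, map_smul, smul_eq_mul, IH a' (fun i => ha _) (m-(k+1))]
    rw [Finset.sum_congr rfl hLHS]
    -- RHS: split off last coordinate
    have hsnoc : ∀ (G : (Fin (h+1) → ℕ) → ℚ),
        ∑ b ∈ Fintype.piFinset fun i : Fin (h+1) => Finset.Icc 1 (a i), G b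
        = ∑ b' ∈ Fintype.piFinset fun i : Fin h => Finset.Icc 1 (a' i),
            ∑ b0 ∈ Finset.Icc 1 aL, G (Fin.snoc b' b0) := by
      intro G
      rw [← Finset.sum_product']
      apply Finset.sum_nbij' (i := fun b => (Fin.init b, b (Fin.last h)))
        (j := fun p => Fin.snoc p.1 p.2)
      · intro b hb
        simp only [Fintype.mem_piFinset] at hb
        simp only [Finset.mem_product, Fintype.mem_piFinset]
        exact ⟨fun i => hb i.castSucc, hb _⟩
      · intro p hp
        simp only [Finset.mem_product, Fintype.mem_piFinset] at hp
        simp only [Fintype.mem_piFinset]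
        intro i
        rcases Fin.eq_castSucc_or_eq_last i with ⟨j, rfl⟩ | rfl
        · simpa [ha'] using hp.1 j
        · simpa [haL] using hp.2
      · intro b _; exact Fin.snoc_init_self b
      · intro p _; simp
      · intro b _; rw [Fin.snoc_init_self]
    rw [hsnoc]
    simp only [Finset.mul_sum]
    rw [Finset.sum_comm]
    apply Finset.sum_congr rfl
    intro b' hb'
    have hb : ∀ i, 1 ≤ b' i ∧ b' i ≤ a' i := by
      intro i
      have := (Fintype.mem_piFinset.mp hb') i
      simpa [Finset.mem_Icc] using this
    have ht' : (Finset.univ.filter fun i => a' i = 1).card ≤ ∑ i, b' i := by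
      rw [Finset.card_filter]
      apply Finset.sum_le_sum
      intro i _
      split
      · exact (hb i).1
      · exact Nat.zero_le _
    have hba : (∑ i, b' i) ≤ ∑ i, a' i := Finset.sum_le_sum fun i _ => (hb i).2
    set Sb := ∑ i, b' i with hSb
    set Sa := ∑ i, a' i with hSa
    set t' := (Finset.univ.filter fun i => a' i = 1).card with ht'def
    set Pv := r + Sb - t' - 1 with hPv
    set Qv := r + Sa - 1 with hQv
    have hPQ : Pv ≤ Qv := by omega
    have hprodE : ∀ b0 : ℕ, (∏ i : Fin (h+1), (eulerianNum (a i - 1) ((Fin.snoc b' b0 : Fin (h+1) → ℕ) i - 1) : ℚ))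
        = (∏ i : Fin h, (eulerianNum (a' i - 1) (b' i - 1) : ℚ)) * (eulerianNum (aL - 1) (b0 - 1) : ℚ) := by
      intro b0
      rw [Fin.prod_univ_castSucc]
      simp [ha', haL]
    have hsumb : ∀ b0 : ℕ, (∑ i : Fin (h+1), (Fin.snoc b' b0 : Fin (h+1) → ℕ) i) = Sb + b0 := by
      intro b0
      rw [Fin.sum_univ_castSucc]
      all_goals simp [hSb]
    have hsuma : (∑ i : Fin (h+1), a i) = Sa + aL := by
      rw [Fin.sum_univ_castSucc]
    have hcard : (Finset.univ.filter fun i : Fin (h+1) => a i = 1).card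
        = t' + (if aL = 1 then 1 else 0) := by
      rw [Finset.card_filter, Fin.sum_univ_castSucc, ht'def, Finset.card_filter]
      all_goals simp [ha', haL]
    simp only [hprodE, hsumb, hsuma, hcard]
    set Ep := ∏ i : Fin h, (eulerianNum (a' i - 1) (b' i - 1) : ℚ) with hEp
    have hL : ∀ k ∈ range m,
        ((((k+1:ℕ)):ℚ)^(aL-1)) * (Ep *
          ((r + (m-(k+1)) + Sb - t' - 1).choose Qv : ℚ))
        = Ep * (((((k+1:ℕ)):ℚ)^(aL-1)) * (((m-(k+1)) + Pv).choose Qv : ℚ)) := by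
      intro k _
      rw [show r + (m-(k+1)) + Sb - t' - 1 = (m-(k+1)) + Pv by omega]
      ring
    rw [Finset.sum_congr rfl hL, ← Finset.mul_sum]
    have hR : ∀ b0 ∈ Finset.Icc 1 aL,
        Ep * (eulerianNum (aL - 1) (b0 - 1) : ℚ) *
          ((r + m + (Sb + b0) - (t' + if aL = 1 then 1 else 0) - 1).choose (r + (Sa + aL) - 1) : ℚ)
        = Ep * ((eulerianNum (aL - 1) (b0 - 1) : ℚ) *
          ((r + m + (Sb + b0) - (t' + if aL = 1 then 1 else 0) - 1).choose (r + (Sa + aL) - 1) : ℚ)) := by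
      intro b0 _
      ring
    rw [Finset.sum_congr rfl hR, ← Finset.mul_sum]
    congr 1
    have haL1 : 1 ≤ aL := ha _
    rcases Nat.lt_or_ge aL 2 with hcase | hcase
    · -- aL = 1
      have h1 : aL = 1 := by omega
      rw [h1]
      simp only [pow_zero, one_mul, Nat.sub_self, if_true]
      rw [show Finset.Icc 1 1 = {1} from Finset.Icc_self 1, Finset.sum_singleton]
      have hcast : (∑ k ∈ range m, (((m-(k+1)) + Pv).choose Qv : ℚ))
          = ((∑ k ∈ range m, ((m-(k+1)) + Pv).choose Qv : ℕ) : ℚ) := by push_cast; rfl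
      rw [hcast, step_one Pv Qv m hPQ]
      rw [show eulerianNum 0 (1-1) = 1 from rfl]
      rw [show r + m + (Sb + 1) - (t' + 1) - 1 = m + Pv by omega,
        show r + (Sa + 1) - 1 = Qv + 1 by omega]
      push_cast
      ring
    · -- aL ≥ 2
      set s := aL - 1 with hs
      have hs1 : 1 ≤ s := by omega
      have haLs : aL = s + 1 := by omega
      have hif : (if aL = 1 then 1 else 0) = 0 := by rw [if_neg (by omega)]
      rw [hif]
      have : (∑ k ∈ range m, ((((k+1:ℕ)):ℚ)^s) * (((m-(k+1)) + Pv).choose Qv : ℚ))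
          = ((∑ k ∈ range m, (k+1)^s * ((m-(k+1)) + Pv).choose Qv : ℕ) : ℚ) := by push_cast; rfl
      rw [this, step_ge s Pv Qv m hs1 hPQ]
      rw [sum_Icc_one_eq_range aL, haLs]
      push_cast
      apply Finset.sum_congr rfl
      intro j hj
      have e3 : r + m + (Sb + (j + 1)) - (t' + 0) - 1 = m + j + Pv + 1 := by omega
      have e4 : r + (Sa + (s + 1)) - 1 = s + Qv + 1 := by omega
      rw [e3, e4]
end Main

/-- If `h_0 = 1` and `m·h_m = Σ_{i=1}^m p_i·h_{m-i}` for `m ≥ 1`, then for positive integers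
`a_1, …, a_h` (`h ≥ 1`), with `t = #{i : a_i = 1}` and `|a| = Σ a_i`, for all `m ≥ 0`, `r ≥ 1`:
`ε_r((D_{a_1} ∘ ⋯ ∘ D_{a_h})(h_m)) = Σ_{1 ≤ b ≤ a} (Π_i E(a_i-1, b_i-1))·C(r+m+|b|-t-1, r+|a|-1)`. -/
theorem stmt15 (H : ℕ → MvPolynomial ℕ+ ℚ) (H0 : H 0 = 1)
    (Hrec : ∀ m : ℕ, 1 ≤ m → (m : ℚ) • H m =
      ∑ i ∈ Finset.range m, X i.succPNat * H (m - (i + 1)))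
    (h : ℕ) (hh : 1 ≤ h) (a : Fin h → ℕ) (ha : ∀ i, 1 ≤ a i)
    (m r : ℕ) (hr : 1 ≤ r) :
    epsHom (r : ℚ) ((List.ofFn fun i => (Dn (a i)).toLinearMap).prod (H m)) =
      ∑ b ∈ Fintype.piFinset fun i => Finset.Icc 1 (a i),
        (∏ i, (eulerianNum (a i - 1) (b i - 1) : ℚ)) *
          ((r + m + (∑ i, b i) - (Finset.univ.filter fun i => a i = 1).card - 1).choose
            (r + (∑ i, a i) - 1) : ℚ) :=
  main_aux H H0 Hrec r hr h a ha m
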